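/- Define a sequence of tuples by the abstract Lefschetz moves: stabilization appends a new generator, Hurwitz moves conjugate adjacent entries, and cyclic permutation rotates the tuple. Starting from the tuple (α₁^{i₁+1}, ..., α_{k-1}^{i_{k-1}+1}) (concatenation of i_j+1 copies of α_j) over the group generated by α₁,...,α_k with relations τ_{α_i}(α_j) = α_j for |i−j| ≥ 2 and τ_{τ_{α_{k-1}}(α_k)}(α_{k-1}) = α_k, the tuple (α₁^{i₁+1}, ..., α_{k-2}^{i_{k-2}+1}, α_{k-1}^{4i_{k-1}+i_k+1}) is related by these moves, together with one replacement of τ_{α_{k-1}}^{-4i_{k-1}}(α_k) by α_k, to the tuple (α₁^{i₁+1}, ..., α_{k-1}^{4i_{k-1}+1}, α_k^{i_k+1}). -/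

import Mathlib

/-!
Statement 14: the combinatorial core of the diffeomorphism
`Z_{(i₁;…;4i_{k-1}+i_k)} ≅ Z_{(i₁;…;4i_{k-1};i_k)}`.  Vanishing cycles are
elements of a set `Γ` with Dehn twists `τ : Γ → Equiv.Perm Γ`; the allowed
moves on tuples are Hurwitz moves, cyclic rotation, stabilization (prepending
the new vanishing cycle `α_k`), and a single formal replacement of
`τ_{α_{k-1}}^{-4 i_{k-1}}(α_k)` by `α_k`.
-/

/-- Abstract Lefschetz moves: Hurwitz moves, cyclic rotation, stabilization by
a designated element `s`, and replacement of the designated element `x` by the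
designated element `y`. -/
inductive LefMoves {Γ : Type*} (τ : Γ → Equiv.Perm Γ) (s x y : Γ) :
    List Γ → List Γ → Prop
  | refl (l : List Γ) : LefMoves τ s x y l l
  | symm {l l' : List Γ} : LefMoves τ s x y l l' → LefMoves τ s x y l' l
  | trans {l₁ l₂ l₃ : List Γ} :
      LefMoves τ s x y l₁ l₂ → LefMoves τ s x y l₂ l₃ → LefMoves τ s x y l₁ l₃
  | moveR (l₁ l₂ : List Γ) (u v : Γ) :
      LefMoves τ s x y (l₁ ++ u :: v :: l₂) (l₁ ++ v :: (τ v u) :: l₂)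
  | moveL (l₁ l₂ : List Γ) (u v : Γ) :
      LefMoves τ s x y (l₁ ++ u :: v :: l₂) (l₁ ++ ((τ u)⁻¹ v) :: u :: l₂)
  | cyclic (u : Γ) (l : List Γ) : LefMoves τ s x y (u :: l) (l ++ [u])
  | stab (l : List Γ) : LefMoves τ s x y l (s :: l)
  | repl (l₁ l₂ : List Γ) :
      LefMoves τ s x y (l₁ ++ x :: l₂) (l₁ ++ y :: l₂)

namespace LefMoves

variable {Γ : Type*} {τ : Γ → Equiv.Perm Γ} {s x y : Γ}

/-- Any "rotation by a block" is realized by cyclic moves. -/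
theorem rotApp (l₁ l₂ : List Γ) : LefMoves τ s x y (l₁ ++ l₂) (l₂ ++ l₁) := by
  induction l₁ generalizing l₂ with
  | nil => simpa using LefMoves.refl (τ := τ) (s := s) (x := x) (y := y) l₂
  | cons u l ih =>
    have h1 : LefMoves τ s x y ((u :: l) ++ l₂) ((l ++ l₂) ++ [u]) := by
      simpa using LefMoves.cyclic (τ := τ) (s := s) (x := x) (y := y) u (l ++ l₂)
    have h2 : LefMoves τ s x y ((l ++ l₂) ++ [u]) (l₂ ++ u :: l) := by
      simpa using ih (l₂ ++ [u])
    exact h1.trans h2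

/-- An element commuting with every member of `m` can be moved to the left
across `m`. -/
theorem pass (b : Γ) : ∀ (m : List Γ), (∀ u ∈ m, τ b u = u) → ∀ (l₁ l₂ : List Γ),
    LefMoves τ s x y (l₁ ++ m ++ b :: l₂) (l₁ ++ b :: (m ++ l₂))
  | [], _, l₁, l₂ => by
      simpa using LefMoves.refl (τ := τ) (s := s) (x := x) (y := y) (l₁ ++ b :: l₂)
  | u :: m, hm, l₁, l₂ => by
      have h1 : LefMoves τ s x y (l₁ ++ (u :: m) ++ b :: l₂)
          (l₁ ++ u :: b :: (m ++ l₂)) := by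
        simpa using pass b m (fun v hv => hm v (List.mem_cons_of_mem _ hv)) (l₁ ++ [u]) l₂
      have h2 : LefMoves τ s x y (l₁ ++ u :: b :: (m ++ l₂))
          (l₁ ++ b :: ((u :: m) ++ l₂)) := by
        have h := LefMoves.moveR (τ := τ) (s := s) (x := x) (y := y) l₁ (m ++ l₂) u b
        rwa [hm u (by simp)] at h
      exact h1.trans h2

/-- The braid relation lets a "conjugated cycle" sweep left across a run of
`a`'s, converting each of them into a `b`. -/
theorem conv {a c b : Γ} (h : τ c a = b) : ∀ (n : ℕ) (l₁ l₂ : List Γ),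
    LefMoves τ s x y (l₁ ++ List.replicate n a ++ c :: l₂)
      (l₁ ++ c :: (List.replicate n b ++ l₂))
  | 0, l₁, l₂ => by
      simpa using LefMoves.refl (τ := τ) (s := s) (x := x) (y := y) (l₁ ++ c :: l₂)
  | n + 1, l₁, l₂ => by
      have h1 : LefMoves τ s x y (l₁ ++ List.replicate (n + 1) a ++ c :: l₂)
          (l₁ ++ a :: c :: (List.replicate n b ++ l₂)) := by
        simpa [List.replicate_succ] using conv h n (l₁ ++ [a]) l₂
      have h2 := LefMoves.moveR (τ := τ) (s := s) (x := x) (y := y) l₁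
        (List.replicate n b ++ l₂) a c
      rw [h] at h2
      exact h1.trans (by simpa [List.replicate_succ] using h2)

/-- Pushing an element to the left across a run of `a`'s conjugates it by
`(τ a)⁻¹ ^ n`. -/
theorem pushL (a : Γ) : ∀ (n : ℕ) (g : Γ) (l₁ l₂ : List Γ),
    LefMoves τ s x y (l₁ ++ List.replicate n a ++ g :: l₂)
      (l₁ ++ (((τ a)⁻¹ ^ n) g) :: (List.replicate n a ++ l₂))
  | 0, g, l₁, l₂ => by
      simpa using LefMoves.refl (τ := τ) (s := s) (x := x) (y := y) (l₁ ++ g :: l₂)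
  | n + 1, g, l₁, l₂ => by
      have h1 : LefMoves τ s x y (l₁ ++ List.replicate (n + 1) a ++ g :: l₂)
          (l₁ ++ a :: (((τ a)⁻¹ ^ n) g) :: (List.replicate n a ++ l₂)) := by
        simpa [List.replicate_succ] using pushL a n g (l₁ ++ [a]) l₂
      have h2 := LefMoves.moveL (τ := τ) (s := s) (x := x) (y := y) l₁
        (List.replicate n a ++ l₂) a (((τ a)⁻¹ ^ n) g)
      have hx : (τ a)⁻¹ (((τ a)⁻¹ ^ n) g) = ((τ a)⁻¹ ^ (n + 1)) g := by
        rw [pow_succ', Equiv.Perm.mul_apply]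
      rw [hx] at h2
      exact h1.trans (by simpa [List.replicate_succ] using h2)

/-- The braid relation turns the pattern `b, a` into `τ_a(b), b`. -/
theorem pairCB {a b : Γ} (h : τ (τ a b) a = b) (l₁ l₂ : List Γ) :
    LefMoves τ s x y (l₁ ++ b :: a :: l₂) (l₁ ++ (τ a b) :: b :: l₂) := by
  have h2 := LefMoves.moveR (τ := τ) (s := s) (x := x) (y := y) l₁ l₂ a (τ a b)
  rw [h] at h2
  exact (LefMoves.moveR l₁ l₂ b a).trans h2

/-- The abstract core of Statement 14. -/
theorem main_aux {Γ : Type*} (τ : Γ → Equiv.Perm Γ) (a b : Γ) (L : List Γ)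
    (hbL : ∀ u ∈ L, τ b u = u)
    (hbraid : τ (τ a b) a = b) (i' i'' : ℕ) :
    LefMoves τ b (((τ a)⁻¹ ^ (4 * i')) b) b
      (L ++ List.replicate (4 * i' + i'' + 1) a)
      (L ++ List.replicate (4 * i' + 1) a ++ List.replicate (i'' + 1) b) := by
  obtain _ | m := i''
  · -- `i'' = 0`: just stabilize and rotate the new cycle to the end.
    exact (LefMoves.stab _).trans (rotApp [b] (L ++ List.replicate (4 * i' + 1) a))
  · -- `i'' = m + 1`
    have hca : τ (τ a b) a = b := hbraid
    -- rotate the last `a` to the front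
    have h1 : LefMoves τ b (((τ a)⁻¹ ^ (4 * i')) b) b
        (L ++ List.replicate (4 * i' + (m + 1) + 1) a)
        (a :: (L ++ (List.replicate (4 * i') a ++ List.replicate (m + 1) a))) := by
      simpa [List.replicate_add, List.replicate_one, List.append_assoc] using
        rotApp (τ := τ) (s := b) (x := ((τ a)⁻¹ ^ (4 * i')) b) (y := b)
          (L ++ (List.replicate (4 * i') a ++ List.replicate (m + 1) a)) [a]
    -- stabilize
    have h2 : LefMoves τ b (((τ a)⁻¹ ^ (4 * i')) b) b
        (a :: (L ++ (List.replicate (4 * i') a ++ List.replicate (m + 1) a)))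
        (b :: a :: (L ++ (List.replicate (4 * i') a ++ List.replicate (m + 1) a))) :=
      LefMoves.stab _
    -- two Hurwitz moves: (b, a) ⇝ (a, τ_a b) ⇝ (τ_a b, b)
    have h3 : LefMoves τ b (((τ a)⁻¹ ^ (4 * i')) b) b
        (b :: a :: (L ++ (List.replicate (4 * i') a ++ List.replicate (m + 1) a)))
        (a :: τ a b :: (L ++ (List.replicate (4 * i') a ++ List.replicate (m + 1) a))) := by
      simpa using LefMoves.moveR (τ := τ) (s := b) (x := ((τ a)⁻¹ ^ (4 * i')) b) (y := b)
        [] (L ++ (List.replicate (4 * i') a ++ List.replicate (m + 1) a)) b a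
    have h4 : LefMoves τ b (((τ a)⁻¹ ^ (4 * i')) b) b
        (a :: τ a b :: (L ++ (List.replicate (4 * i') a ++ List.replicate (m + 1) a)))
        (τ a b :: b :: (L ++ (List.replicate (4 * i') a ++ List.replicate (m + 1) a))) := by
      have h := LefMoves.moveR (τ := τ) (s := b) (x := ((τ a)⁻¹ ^ (4 * i')) b) (y := b)
        [] (L ++ (List.replicate (4 * i') a ++ List.replicate (m + 1) a)) a (τ a b)
      rw [hca] at h
      simpa using h
    -- rotate the conjugated cycle to the back
    have h5 : LefMoves τ b (((τ a)⁻¹ ^ (4 * i')) b) b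
        (τ a b :: b :: (L ++ (List.replicate (4 * i') a ++ List.replicate (m + 1) a)))
        ((b :: (L ++ (List.replicate (4 * i') a ++ List.replicate (m + 1) a))) ++ [τ a b]) :=
      LefMoves.cyclic _ _
    -- sweep it left across `m + 1` copies of `a`, converting them to `b`'s
    have h6 : LefMoves τ b (((τ a)⁻¹ ^ (4 * i')) b) b
        ((b :: (L ++ (List.replicate (4 * i') a ++ List.replicate (m + 1) a))) ++ [τ a b])
        (b :: (L ++ (List.replicate (4 * i') a ++ (τ a b :: b :: List.replicate m b)))) := by
      simpa [List.append_assoc, List.replicate_succ] using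
        conv (τ := τ) (s := b) (x := ((τ a)⁻¹ ^ (4 * i')) b) (y := b) hca (m + 1)
          ((b :: L) ++ List.replicate (4 * i') a) ([] : List Γ)
    -- undo the pair: (τ_a b, b) ⇝ (b, a)
    have h7 : LefMoves τ b (((τ a)⁻¹ ^ (4 * i')) b) b
        (b :: (L ++ (List.replicate (4 * i') a ++ (τ a b :: b :: List.replicate m b))))
        (b :: (L ++ (List.replicate (4 * i') a ++ (b :: a :: List.replicate m b)))) := by
      simpa [List.append_assoc] using
        (pairCB (τ := τ) (s := b) (x := ((τ a)⁻¹ ^ (4 * i')) b) (y := b) hca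
          ((b :: L) ++ List.replicate (4 * i') a) (List.replicate m b)).symm
    -- push the middle `b` to the left across the run of `a`'s
    have h8 : LefMoves τ b (((τ a)⁻¹ ^ (4 * i')) b) b
        (b :: (L ++ (List.replicate (4 * i') a ++ (b :: a :: List.replicate m b))))
        (b :: (L ++ ((((τ a)⁻¹ ^ (4 * i')) b) ::
          (List.replicate (4 * i') a ++ (a :: List.replicate m b))))) := by
      simpa [List.append_assoc] using
        pushL (τ := τ) (s := b) (x := ((τ a)⁻¹ ^ (4 * i')) b) (y := b) a (4 * i') b
          (b :: L) (a :: List.replicate m b)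
    -- the formal replacement
    have h9 : LefMoves τ b (((τ a)⁻¹ ^ (4 * i')) b) b
        (b :: (L ++ ((((τ a)⁻¹ ^ (4 * i')) b) ::
          (List.replicate (4 * i') a ++ (a :: List.replicate m b)))))
        (b :: (L ++ (b :: (List.replicate (4 * i') a ++ (a :: List.replicate m b))))) := by
      simpa using LefMoves.repl (τ := τ) (s := b) (x := ((τ a)⁻¹ ^ (4 * i')) b) (y := b)
        (b :: L) (List.replicate (4 * i') a ++ (a :: List.replicate m b))
    -- pass the new `b` left across `L`
    have h10 : LefMoves τ b (((τ a)⁻¹ ^ (4 * i')) b) b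
        (b :: (L ++ (b :: (List.replicate (4 * i') a ++ (a :: List.replicate m b)))))
        (b :: b :: (L ++ (List.replicate (4 * i') a ++ (a :: List.replicate m b)))) := by
      simpa using pass (τ := τ) (s := b) (x := ((τ a)⁻¹ ^ (4 * i')) b) (y := b) b L hbL
        [b] (List.replicate (4 * i') a ++ (a :: List.replicate m b))
    -- rotate the two leading `b`'s to the back
    have h11 : LefMoves τ b (((τ a)⁻¹ ^ (4 * i')) b) b
        (b :: b :: (L ++ (List.replicate (4 * i') a ++ (a :: List.replicate m b))))
        (L ++ List.replicate (4 * i' + 1) a ++ List.replicate (m + 1 + 1) b) := by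
      simpa [List.replicate_add, List.replicate_one, List.append_assoc] using
        rotApp (τ := τ) (s := b) (x := ((τ a)⁻¹ ^ (4 * i')) b) (y := b)
          [b, b] (L ++ (List.replicate (4 * i') a ++ (a :: List.replicate m b)))
    exact h1.trans (h2.trans (h3.trans (h4.trans (h5.trans (h6.trans (h7.trans
      (h8.trans (h9.trans (h10.trans h11)))))))))

end LefMoves

theorem stmt_14 {Γ : Type*} (τ : Γ → Equiv.Perm Γ) (k : ℕ) (hk : 2 ≤ k)
    (α : Fin k → Γ)
    -- nonadjacent vanishing cycles in the `A_k`-diagram commute with the twists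
    (hcomm : ∀ p q : Fin k, ((p : ℕ) + 2 ≤ (q : ℕ) ∨ (q : ℕ) + 2 ≤ (p : ℕ)) →
      τ (α p) (α q) = α q)
    -- the braid-type relation between the last two vanishing cycles
    (hbraid : τ (τ (α ⟨k - 2, by omega⟩) (α ⟨k - 1, by omega⟩)) (α ⟨k - 2, by omega⟩)
      = α ⟨k - 1, by omega⟩)
    (i : Fin (k - 2) → ℕ) (i' i'' : ℕ) :
    LefMoves τ (α ⟨k - 1, by omega⟩)
      (((τ (α ⟨k - 2, by omega⟩))⁻¹ ^ (4 * i')) (α ⟨k - 1, by omega⟩))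
      (α ⟨k - 1, by omega⟩)
      ((List.ofFn fun j : Fin (k - 2) =>
          List.replicate (i j + 1) (α ⟨j, by omega⟩)).flatten ++
        List.replicate (4 * i' + i'' + 1) (α ⟨k - 2, by omega⟩))
      ((List.ofFn fun j : Fin (k - 2) =>
          List.replicate (i j + 1) (α ⟨j, by omega⟩)).flatten ++
        List.replicate (4 * i' + 1) (α ⟨k - 2, by omega⟩) ++
        List.replicate (i'' + 1) (α ⟨k - 1, by omega⟩)) := by
  refine LefMoves.main_aux τ _ _ _ ?_ hbraid i' i''
  intro u hu
  simp only [List.mem_flatten, List.mem_ofFn] at hu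
  obtain ⟨_, ⟨j, rfl⟩, hu⟩ := hu
  rw [List.eq_of_mem_replicate hu]
  refine hcomm _ _ (Or.inr ?_)
  have := j.isLt
  simp only [Fin.val_mk]
  omega
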